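/- With f, φ, Φ, ĉ as defined, for any r > 0 and any h, γ > 0 with 128αγ²·(h γ^{-1}) ≤ 2/3, the inequality (r/√(2γ^{-1}h)) ∫_0^{√(2γ^{-1}h)} φ(s) ds ≥ (1/2) f(r) holds. -/
import Mathlib


open MeasureTheory

/-- `(r/√(2γ⁻¹h)) ∫_0^{√(2γ⁻¹h)} φ ≥ (1/2) f(r)` under the smallness condition
`128αγ²·hγ⁻¹ ≤ 2/3`. -/
theorem stmt6 (α γ R₁ h : ℝ) (hα : 0 < α) (hγ : 0 < γ) (hR : 0 < R₁) (hh : 0 < h)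
    (hsmall : 128 * α * γ ^ 2 * (h * γ⁻¹) ≤ 2 / 3) :
    let A : ℝ := 128 * α * γ ^ 2
    let φ : ℝ → ℝ := fun s => Real.exp (-A * (min s R₁) ^ 2 / 2)
    let Φ : ℝ → ℝ := fun s => ∫ x in (0:ℝ)..s, φ x
    let chat : ℝ := 1 / (γ * ∫ s in (0:ℝ)..R₁, Φ s / φ s)
    let ψ : ℝ → ℝ := fun s => 1 - chat * γ / 2 * ∫ x in (0:ℝ)..(min s R₁), Φ x / φ x
    let f : ℝ → ℝ := fun r => ∫ s in (0:ℝ)..r, φ s * ψ s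
    ∀ r : ℝ, 0 < r →
      (1 / 2) * f r ≤
        (r / Real.sqrt (2 * γ⁻¹ * h)) * ∫ s in (0:ℝ)..Real.sqrt (2 * γ⁻¹ * h), φ s := by
  intro A φ Φ chat ψ f r hr
  have hA : 0 < A := by unfold A; positivity
  set σ := Real.sqrt (2 * γ⁻¹ * h) with hσdef
  have hσsq : σ ^ 2 = 2 * γ⁻¹ * h := Real.sq_sqrt (by positivity)
  have hσpos : 0 < σ := Real.sqrt_pos.mpr (by positivity)
  have hφpos : ∀ s, 0 < φ s := fun s => Real.exp_pos _
  have hφle1 : ∀ s, φ s ≤ 1 := by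
    intro s
    have h1 : 0 ≤ A * min s R₁ ^ 2 := by positivity
    calc φ s ≤ Real.exp 0 := Real.exp_le_exp.mpr (by unfold φ A at *; nlinarith)
    _ = 1 := Real.exp_zero
  have hφcont : Continuous φ := by
    unfold φ
    exact Real.continuous_exp.comp (by continuity)
  have hΦcont : Continuous Φ :=
    intervalIntegral.continuous_primitive (fun a b => hφcont.intervalIntegrable a b) 0
  have hgcont : Continuous (fun x => Φ x / φ x) :=
    hΦcont.div hφcont (fun x => (hφpos x).ne')
  have hΦnonneg : ∀ s, 0 ≤ s → 0 ≤ Φ s := fun s hs =>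
    intervalIntegral.integral_nonneg hs (fun x _ => (hφpos x).le)
  have hgnonneg : ∀ x, 0 ≤ x → 0 ≤ Φ x / φ x := fun x hx =>
    div_nonneg (hΦnonneg x hx) (hφpos x).le
  have hchat : 0 ≤ chat := by
    unfold chat
    have hI : 0 ≤ ∫ s in (0:ℝ)..R₁, Φ s / φ s :=
      intervalIntegral.integral_nonneg hR.le (fun x hx => hgnonneg x hx.1)
    positivity
  have hψle1 : ∀ s, 0 ≤ s → ψ s ≤ 1 := by
    intro s hs
    show 1 - chat * γ / 2 * (∫ x in (0:ℝ)..(min s R₁), Φ x / φ x) ≤ 1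
    have hmin : 0 ≤ min s R₁ := le_min hs hR.le
    have hI : 0 ≤ ∫ x in (0:ℝ)..(min s R₁), Φ x / φ x :=
      intervalIntegral.integral_nonneg hmin (fun x hx => hgnonneg x hx.1)
    nlinarith [mul_nonneg (mul_nonneg hchat hγ.le) hI]
  -- f r ≤ r
  have hψcont : Continuous ψ := by
    unfold ψ
    have : Continuous (fun t : ℝ => ∫ x in (0:ℝ)..t, Φ x / φ x) :=
      intervalIntegral.continuous_primitive (fun a b => hgcont.intervalIntegrable a b) 0
    exact continuous_const.sub (continuous_const.mul (this.comp (continuous_id.min continuous_const)))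
  have hfr : f r ≤ r := by
    have hmono : f r ≤ ∫ s in (0:ℝ)..r, (1:ℝ) := by
      apply intervalIntegral.integral_mono_on hr.le
        ((hφcont.mul hψcont).intervalIntegrable 0 r) (intervalIntegrable_const)
      intro x hx
      calc φ x * ψ x ≤ φ x * 1 :=
            mul_le_mul_of_nonneg_left (hψle1 x hx.1) (hφpos x).le
        _ ≤ 1 := by simpa using hφle1 x
    simpa using hmono
  -- lower bound for the integral
  have hint : σ * (1/2) ≤ ∫ s in (0:ℝ)..σ, φ s := by
    have hmono : (∫ s in (0:ℝ)..σ, (1/2 : ℝ)) ≤ ∫ s in (0:ℝ)..σ, φ s := by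
      apply intervalIntegral.integral_mono_on hσpos.le intervalIntegrable_const
        (hφcont.intervalIntegrable 0 σ)
      intro x hx
      have hm : 0 ≤ min x R₁ := le_min hx.1 hR.le
      have hmle : min x R₁ ≤ x := min_le_left _ _
      have hsq : min x R₁ ^ 2 ≤ σ ^ 2 := by nlinarith [hx.2]
      have hAσ : A * σ ^ 2 / 2 ≤ 2/3 := by
        rw [hσsq]; unfold A; nlinarith
      have harg : -(2/3 : ℝ) ≤ -A * min x R₁ ^ 2 / 2 := by nlinarith
      have hlog : (2/3 : ℝ) ≤ Real.log 2 := by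
        have := Real.log_two_gt_d9; linarith
      calc (1/2 : ℝ) = Real.exp (-Real.log 2) := by
            rw [Real.exp_neg, Real.exp_log two_pos]; norm_num
        _ ≤ Real.exp (-A * min x R₁ ^ 2 / 2) := Real.exp_le_exp.mpr (by linarith)
    simpa using hmono
  have hrσ : 0 ≤ r / σ := by positivity
  calc (1/2) * f r ≤ (1/2) * r := by linarith
    _ = (r / σ) * (σ * (1/2)) := by field_simp
    _ ≤ (r / σ) * ∫ s in (0:ℝ)..σ, φ s := mul_le_mul_of_nonneg_left hint hrσ
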